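/- Let F be a field and let n − 1 ≥ k ≥ 1. Then for every (n−1)×k matrix Y over F, det_{(n-1),k}(Y) = det_{n,k}(L^+(Y)). -/
import Mathlib


open Classical in
noncomputable def cullisDet {F : Type*} [Field F] {n k : ℕ}
    (X : Matrix (Fin n) (Fin k) F) : F :=
  ∑ f : Fin k → Fin n, if StrictMono f then
    (-1 : F) ^ (∑ j : Fin k, ((f j : ℕ) - (j : ℕ))) * (X.submatrix f id).det
  else 0


/-- `L⁺`: append a zero row at the bottom. -/
def Lplus {F : Type*} [Field F] {n k : ℕ}
    (Y : Matrix (Fin (n - 1)) (Fin k) F) : Matrix (Fin n) (Fin k) F :=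
  fun i j => if h : (i : ℕ) < n - 1 then Y ⟨i, h⟩ j else 0

/-- Lemma 4.7: `det_{(n-1),k}(Y) = det_{n,k}(L⁺(Y))`. -/
theorem stmt7 {F : Type*} [Field F] {n k : ℕ} (hk : 1 ≤ k) (hkn : k ≤ n - 1)
    (Y : Matrix (Fin (n - 1)) (Fin k) F) :
    cullisDet Y = cullisDet (Lplus Y : Matrix (Fin n) (Fin k) F) := by
  classical
  have hn1 : n - 1 ≤ n := Nat.sub_le n 1
  unfold cullisDet
  refine Finset.sum_of_injOn (fun f => Fin.castLE hn1 ∘ f) ?_ ?_ ?_ ?_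
  · intro a _ b _ hab
    funext j
    have h2 : Fin.castLE hn1 (a j) = Fin.castLE hn1 (b j) := congrFun hab j
    exact Fin.castLE_injective hn1 h2
  · intro a _; exact Finset.mem_coe.mpr (Finset.mem_univ _)
  · intro g _ hg
    by_cases hsm : StrictMono g
    · rw [if_pos hsm]
      -- some row of g hits n-1
      have hex : ∃ j, ¬ ((g j : ℕ) < n - 1) := by
        by_contra hc
        push_neg at hc
        exact hg ⟨fun j => ⟨(g j : ℕ), hc j⟩, Finset.mem_coe.mpr (Finset.mem_univ _),
          funext fun j => Fin.ext rfl⟩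
      obtain ⟨j, hj⟩ := hex
      have hrow : ((Lplus Y).submatrix g id).det = 0 := by
        apply Matrix.det_eq_zero_of_row_eq_zero j
        intro j'
        simp [Matrix.submatrix, Lplus, hj]
      rw [hrow, mul_zero]
    · rw [if_neg hsm]
  · intro f _
    have hcast : StrictMono (Fin.castLE hn1 ∘ f) ↔ StrictMono f := by
      constructor
      · intro h a b hab
        have h2 := h hab
        simp only [Function.comp_apply, Fin.lt_def, Fin.coe_castLE] at h2
        exact h2
      · intro h a b hab
        have h2 := h hab
        simp only [Fin.lt_def] at h2
        simp only [Function.comp_apply, Fin.lt_def, Fin.coe_castLE]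
        exact h2
    by_cases hsm : StrictMono f
    · rw [if_pos hsm, if_pos (hcast.mpr hsm)]
      have hsub : ((Lplus Y).submatrix (Fin.castLE hn1 ∘ f) id) = Y.submatrix f id := by
        ext i j
        simp only [Matrix.submatrix_apply, Function.comp_apply, id_eq, Lplus]
        rw [dif_pos (by simpa using (f i).isLt)]
        exact congrArg (fun x => Y x j) (Fin.ext rfl)
      rw [hsub]
      norm_num
    · rw [if_neg hsm, if_neg (fun h => hsm (hcast.mp h))]
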